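/- For every positive integer t, U*_{2t}(q) = (−1)^t · Σ over all partitions (1^{m_1}, 2^{m_2}, …, t^{m_t}) of t of (−1)^{m_1+⋯+m_t} · ((m_1+⋯+m_t)!/(m_1!⋯m_t!)) · ∏_{k=1}^t (U_{2k}(q))^{m_k}, as an identity in ℚ⟦q⟧. -/

import Mathlib

open PowerSeries Finset

noncomputable section

/-- The operator `D = q·d/dq` on `ℚ⟦q⟧`, coefficientwise `aₙ ↦ n·aₙ`. -/
def Dq (F : ℚ⟦X⟧) : ℚ⟦X⟧ := PowerSeries.mk fun n => (n : ℚ) * coeff n F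

/-- `E₂(q) = 1 - 24 Σ_{n≥1} σ₁(n) qⁿ`. -/
def E2 : ℚ⟦X⟧ := PowerSeries.mk fun n => if n = 0 then 1 else -24 * ∑ d ∈ n.divisors, (d : ℚ)

/-- `E₄(q) = 1 + 240 Σ_{n≥1} σ₃(n) qⁿ`. -/
def E4 : ℚ⟦X⟧ := PowerSeries.mk fun n => if n = 0 then 1 else 240 * ∑ d ∈ n.divisors, (d : ℚ) ^ 3

/-- `E₆(q) = 1 - 504 Σ_{n≥1} σ₅(n) qⁿ`. -/
def E6 : ℚ⟦X⟧ := PowerSeries.mk fun n => if n = 0 then 1 else -504 * ∑ d ∈ n.divisors, (d : ℚ) ^ 5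

/-- `∏_{k≥1} (1 - qᵏ)`, defined coefficientwise by truncated finite products
(factors with `k > N` do not affect the `N`-th coefficient). -/
def eulerProd : ℚ⟦X⟧ :=
  PowerSeries.mk fun N => coeff N (∏ k ∈ Finset.Icc 1 N, (1 - X ^ k : ℚ⟦X⟧))

/-- `Σ_{n ∈ ℤ} (-1)ⁿ (6n+1)^{2t} q^{n(3n+1)/2}` (any `n` with `n(3n+1)/2 = N`
satisfies `|n| ≤ N`). -/
def pentagonalSum (t : ℕ) : ℚ⟦X⟧ := PowerSeries.mk fun N =>
  ∑ n ∈ Finset.Icc (-(N : ℤ)) (N : ℤ),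
    if n * (3 * n + 1) = 2 * N then (-1 : ℚ) ^ n * ((6 * n + 1 : ℤ) : ℚ) ^ (2 * t) else 0

/-- `θ₂(q)⁴ = 16 q (Σ_{n≥0} q^{n(n+1)})⁴`. -/
def theta2four : ℚ⟦X⟧ :=
  16 * X * (PowerSeries.mk fun N => ∑ n ∈ Finset.range (N + 1),
    if n * (n + 1) = N then (1 : ℚ) else 0) ^ 4

/-- `θ₃(q) = 1 + 2 Σ_{n≥1} q^{n²}`. -/
def theta3 : ℚ⟦X⟧ :=
  1 + 2 * PowerSeries.mk fun N => ∑ n ∈ Finset.Icc 1 N, if n ^ 2 = N then (1 : ℚ) else 0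

/-- `θ₄(q) = 1 + 2 Σ_{n≥1} (-1)ⁿ q^{n²}`. -/
def theta4 : ℚ⟦X⟧ :=
  1 + 2 * PowerSeries.mk fun N => ∑ n ∈ Finset.Icc 1 N, if n ^ 2 = N then (-1 : ℚ) ^ n else 0

/-- `Θ_{r,s} = θ₂^{4r} θ₃^{4s} + θ₂^{4s} θ₃^{4r}`. -/
def Theta (r s : ℕ) : ℚ⟦X⟧ :=
  theta2four ^ r * theta3 ^ (4 * s) + theta2four ^ s * theta3 ^ (4 * r)

/-- MacMahon's `C_{2t}(q) = Σ_{0<s₁<⋯<s_t} q^{Σ(2sᵢ-1)} ∏ (1-q^{2sᵢ-1})⁻²`,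
defined coefficientwise: tuples with some `sᵢ > N+1` do not affect the `N`-th coefficient. -/
def Cmac (t : ℕ) : ℚ⟦X⟧ := PowerSeries.mk fun N =>
  coeff N (∑ S ∈ (Finset.Icc 1 (N + 1)).powersetCard t,
    ∏ s ∈ S, (X ^ (2 * s - 1) * ((1 - X ^ (2 * s - 1) : ℚ⟦X⟧)⁻¹) ^ 2))

/-- MacMahon's `U_{2t}(q) = Σ_{0<k₁<⋯<k_t} q^{Σkᵢ} ∏ (1-q^{kᵢ})⁻²`,
defined coefficientwise by truncation. -/
def Umac (t : ℕ) : ℚ⟦X⟧ := PowerSeries.mk fun N =>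
  coeff N (∑ S ∈ (Finset.Icc 1 (N + 1)).powersetCard t,
    ∏ k ∈ S, (X ^ k * ((1 - X ^ k : ℚ⟦X⟧)⁻¹) ^ 2))

/-- `U*_{2t}(q) = Σ_{0<k₁≤⋯≤k_t} q^{Σkᵢ} ∏ (1-q^{kᵢ})⁻²`, a sum over multisets of
size `t`, defined coefficientwise by truncation. -/
def UmacStar (t : ℕ) : ℚ⟦X⟧ := PowerSeries.mk fun N =>
  coeff N (∑ m ∈ (Finset.Icc 1 (N + 1)).sym t,
    ((m : Multiset ℕ).map fun k => X ^ k * ((1 - X ^ k : ℚ⟦X⟧)⁻¹) ^ 2).prod)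

/-- `E₂(q²)`, the substitution `q ↦ q²` in `E₂`. -/
def E2sq : ℚ⟦X⟧ := PowerSeries.mk fun n => if 2 ∣ n then coeff (n / 2) E2 else 0

/-- `G₂(q) = 2 E₂(q²) - E₂(q)`. -/
def G2 : ℚ⟦X⟧ := 2 * E2sq - E2

namespace MacAux

variable {R : Type*} [CommRing R] {ι : Type*} [DecidableEq ι]

lemma agree_mul {N : ℕ} {A A' B B' : R⟦X⟧}
    (hA : ∀ k ≤ N, coeff k A = coeff k A')
    (hB : ∀ k ≤ N, coeff k B = coeff k B') :
    ∀ k ≤ N, coeff k (A * B) = coeff k (A' * B') := by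
  intro k hk
  rw [coeff_mul, coeff_mul]
  refine Finset.sum_congr rfl fun p hp => ?_
  rw [Finset.HasAntidiagonal.mem_antidiagonal] at hp
  rw [hA p.1 (by omega), hB p.2 (by omega)]

lemma agree_pow {N : ℕ} {A A' : R⟦X⟧}
    (hA : ∀ k ≤ N, coeff k A = coeff k A') (n : ℕ) :
    ∀ k ≤ N, coeff k (A ^ n) = coeff k (A' ^ n) := by
  induction n with
  | zero => simp
  | succ n ih =>
    rw [pow_succ, pow_succ]
    exact agree_mul ih hA

lemma agree_prod {N : ℕ} {κ : Type*} (s : Finset κ) (F F' : κ → R⟦X⟧)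
    (h : ∀ i ∈ s, ∀ k ≤ N, coeff k (F i) = coeff k (F' i)) :
    ∀ k ≤ N, coeff k (∏ i ∈ s, F i) = coeff k (∏ i ∈ s, F' i) := by
  induction s using Finset.cons_induction with
  | empty => simp
  | cons a s ha ih =>
    rw [Finset.prod_cons, Finset.prod_cons]
    exact agree_mul (h a (Finset.mem_cons_self a s))
      (ih fun i hi => h i (Finset.mem_cons.2 (Or.inr hi)))

lemma one_sub_C_mul_X_mul_mk_pow (a : R) :
    (1 - C a * X) * PowerSeries.mk (fun n => a ^ n) = 1 := by
  ext n
  cases n with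
  | zero => simp
  | succ n =>
    rw [sub_mul, one_mul, map_sub, mul_assoc, coeff_C_mul, coeff_succ_X_mul]
    simp [pow_succ, mul_comm]

lemma hsum_eq_coeff_prod (s : Finset ι) (x : ι → R) (t : ℕ) :
    (∑ m ∈ s.sym t, ((m : Multiset ι).map x).prod)
      = coeff t (∏ k ∈ s, PowerSeries.mk fun n => x k ^ n) := by
  rw [coeff_prod]
  simp only [coeff_mk]
  have hcount : ∀ m ∈ s.sym t, ∀ i ∈ (m : Multiset ι), i ∈ s := fun m hm =>
    Finset.mem_sym_iff.1 hm
  refine Finset.sum_bij' (fun m _ => Multiset.toFinsupp (m : Multiset ι))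
    (fun l hl => (⟨Finsupp.toMultiset l, ?_⟩ : Sym ι t)) ?_ ?_ ?_ ?_ ?_
  · -- card of toMultiset = t
    rw [Finsupp.card_toMultiset]
    rw [Finset.mem_finsuppAntidiag] at hl
    rw [Finsupp.sum, ← hl.1]
    exact Finset.sum_subset hl.2 (fun i _ hi => Finsupp.notMem_support_iff.1 hi)
  · -- forward membership
    intro m hm
    rw [Finset.mem_finsuppAntidiag]
    refine ⟨?_, ?_⟩
    · have hsub : (m : Multiset ι).toFinset ⊆ s := fun i hi =>
        hcount m hm i (Multiset.mem_toFinset.1 hi)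
      have : ∑ i ∈ s, Multiset.count i (m : Multiset ι) = t := by
        rw [← Finset.sum_subset hsub (fun i _ hi =>
          Multiset.count_eq_zero_of_notMem (fun h => hi (Multiset.mem_toFinset.2 h)))]
        rw [Multiset.toFinset_sum_count_eq]
        exact m.prop
      refine (Finset.sum_congr rfl fun i _ => ?_).trans this
      exact Multiset.toFinsupp_apply _ _
    · intro i hi
      rw [Multiset.toFinsupp_support, Multiset.mem_toFinset] at hi
      exact hcount m hm i hi
  · -- backward membership
    intro l hl
    refine Finset.mem_sym_iff.2 ?_
    intro a ha
    rw [Finset.mem_finsuppAntidiag] at hl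
    refine hl.2 ?_
    rw [← Finsupp.mem_toMultiset]
    exact ha
  · intro m hm
    apply Subtype.ext
    exact Multiset.toFinsupp_toMultiset _
  · intro l hl
    exact Finsupp.toMultiset_toFinsupp l
  · intro m hm
    rw [Finset.prod_multiset_map_count]
    refine Finset.prod_subset (fun i hi => hcount m hm i (Multiset.mem_toFinset.1 hi)) ?_
    intro i _ hi
    rw [Multiset.count_eq_zero_of_notMem (fun h => hi (Multiset.mem_toFinset.2 h)), pow_zero]


lemma prod_one_sub_eq (s : Finset ι) (x : ι → R) :
    (∏ k ∈ s, (1 - C (x k) * X)) =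
      ∑ S ∈ s.powerset, C ((-1 : R) ^ S.card * ∏ k ∈ S, x k) * X ^ S.card := by
  have h0 : ∀ k ∈ s, (1 - C (x k) * X) = (-(C (x k) * X)) + 1 := by intros; ring
  rw [Finset.prod_congr rfl h0, Finset.prod_add]
  refine Finset.sum_congr rfl fun S _ => ?_
  rw [Finset.prod_const_one, mul_one]
  have : ∀ k ∈ S, (-(C (x k) * X)) = (-1 : R⟦X⟧) * (C (x k) * X) := by intros; ring
  rw [Finset.prod_congr rfl this, Finset.prod_mul_distrib, Finset.prod_mul_distrib,
    Finset.prod_const, Finset.prod_const, ← map_prod, map_mul, map_pow, map_neg, map_one]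
  ring

lemma coeff_P (s : Finset ι) (x : ι → R) (j : ℕ) :
    coeff j (∏ k ∈ s, (1 - C (x k) * X)) =
      (-1 : R) ^ j * ∑ S ∈ s.powersetCard j, ∏ k ∈ S, x k := by
  rw [prod_one_sub_eq, map_sum, Finset.mul_sum, Finset.powersetCard_eq_filter,
    Finset.sum_filter]
  refine Finset.sum_congr rfl fun S _ => ?_
  rw [coeff_C_mul, coeff_X_pow]
  by_cases h : S.card = j
  · simp [h]
  · simp [h, Ne.symm h]

lemma coeff_zero_of_pow_mul {u A : R⟦X⟧} (hu : constantCoeff u = 0) {m k : ℕ}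
    (hk : k < m) : coeff k (u ^ m * A) = 0 := by
  obtain ⟨v, hv⟩ := X_dvd_iff.2 hu
  rw [hv, mul_pow, mul_assoc, coeff_X_pow_mul']
  simp [Nat.not_le_of_lt hk, if_neg]

lemma coeff_G_eq (s : Finset ι) (x : ι → R) (t : ℕ) :
    coeff t (∏ k ∈ s, PowerSeries.mk fun n => x k ^ n) =
      ∑ n ∈ range (t + 1),
        coeff t ((1 - ∏ k ∈ s, (1 - C (x k) * X)) ^ n) := by
  set P : R⟦X⟧ := ∏ k ∈ s, (1 - C (x k) * X) with hP
  set G : R⟦X⟧ := ∏ k ∈ s, PowerSeries.mk fun n => x k ^ n with hG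
  set u : R⟦X⟧ := 1 - P with hu
  have hPG : P * G = 1 := by
    rw [hP, hG, ← Finset.prod_mul_distrib]
    exact Finset.prod_eq_one fun k _ => one_sub_C_mul_X_mul_mk_pow (x k)
  have hu0 : constantCoeff u = 0 := by
    have : constantCoeff P = 1 := by
      rw [hP, map_prod]
      exact Finset.prod_eq_one fun k _ => by simp
    simp [hu, this]
  have hgeom := geom_sum_mul u (t + 1)
  have hGW : G = (∑ i ∈ range (t + 1), u ^ i) + u ^ (t + 1) * G := by
    have hP' : P = 1 - u := by rw [hu]; ring
    rw [hP'] at hPG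
    linear_combination G * hgeom + (∑ i ∈ range (t + 1), u ^ i) * hPG
  calc coeff t G = coeff t ((∑ i ∈ range (t + 1), u ^ i) + u ^ (t + 1) * G) := by
        rw [← hGW]
    _ = ∑ n ∈ range (t + 1), coeff t (u ^ n) := by
        rw [map_add, coeff_zero_of_pow_mul hu0 (Nat.lt_succ_self t), add_zero, map_sum]


lemma coeff_pow_u (s : Finset ι) (x : ι → R) (t n : ℕ) :
    coeff t ((1 - ∏ k ∈ s, (1 - C (x k) * X)) ^ n) =
      ∑ k ∈ piAntidiag (Icc 1 t) n,
        if ∑ j ∈ Icc 1 t, j * k j = t then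
          (Nat.multinomial (Icc 1 t) k : R) *
            ∏ j ∈ Icc 1 t, ((-1 : R) ^ (j + 1) * ∑ S ∈ s.powersetCard j, ∏ i ∈ S, x i) ^ k j
        else 0 := by
  set E : ℕ → R := fun j => ∑ S ∈ s.powersetCard j, ∏ i ∈ S, x i with hE
  set c : ℕ → R := fun j => (-1 : R) ^ (j + 1) * E j with hc
  set utld : R⟦X⟧ := ∑ j ∈ Icc 1 t, C (c j) * X ^ j with hutld
  have hagree : ∀ m ≤ t, coeff m utld = coeff m (1 - ∏ k ∈ s, (1 - C (x k) * X)) := by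
    intro m hm
    have h1 : coeff m utld = if m ∈ Icc 1 t then c m else 0 := by
      rw [hutld, map_sum]
      rw [← Finset.sum_ite_eq (Icc 1 t) m c]
      refine Finset.sum_congr rfl fun j _ => ?_
      rw [coeff_C_mul, coeff_X_pow]
      by_cases h : m = j
      · simp [h]
      · simp [h]
    have h2 : coeff m (1 - ∏ k ∈ s, (1 - C (x k) * X))
        = (if m = 0 then 1 else 0) - (-1 : R) ^ m * E m := by
      rw [map_sub, coeff_P, coeff_one]
    rw [h1, h2]
    rcases Nat.eq_zero_or_pos m with hm0 | hm0
    · subst hm0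
      have : E 0 = 1 := by simp [hE]
      simp [this]
    · have hmem : m ∈ Icc 1 t := Finset.mem_Icc.2 ⟨hm0, hm⟩
      simp only [hmem, if_pos, Nat.pos_iff_ne_zero.1 hm0, if_neg, hc]
      have : m ≠ 0 := Nat.pos_iff_ne_zero.1 hm0
      simp [this, pow_succ]
  rw [← agree_pow hagree n t le_rfl, hutld,
    Finset.sum_pow_eq_sum_piAntidiag (Icc 1 t) (fun j => C (c j) * X ^ j) n, map_sum]
  refine Finset.sum_congr rfl fun k hk => ?_
  have hprod : ∏ j ∈ Icc 1 t, (C (c j) * X ^ j) ^ k j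
      = C (∏ j ∈ Icc 1 t, c j ^ k j) * X ^ (∑ j ∈ Icc 1 t, j * k j) := by
    rw [map_prod, ← Finset.prod_pow_eq_pow_sum, ← Finset.prod_mul_distrib]
    refine Finset.prod_congr rfl fun j _ => ?_
    rw [mul_pow, map_pow, pow_mul]
  rw [hprod]
  have hcast : (Nat.multinomial (Icc 1 t) k : R⟦X⟧) = C ((Nat.multinomial (Icc 1 t) k : R)) := by
    simp
  rw [hcast, ← mul_assoc, ← map_mul, coeff_C_mul, coeff_X_pow]
  by_cases h : ∑ j ∈ Icc 1 t, j * k j = t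
  · simp [h, hc, hE]
  · simp [h, Ne.symm h]


lemma prod_Icc_fin {M : Type*} [CommMonoid M] (t : ℕ) (f : ℕ → M) :
    ∏ j ∈ Icc 1 t, f j = ∏ i : Fin t, f (i.1 + 1) := by
  refine Finset.prod_bij' (fun j hj => (⟨j - 1, by have := Finset.mem_Icc.1 hj; omega⟩ : Fin t))
    (fun i _ => i.1 + 1) (fun a _ => Finset.mem_univ _) ?_ ?_ ?_ ?_
  · intro i _
    have := i.isLt
    exact Finset.mem_Icc.2 ⟨by omega, by omega⟩
  · intro j hj
    have := Finset.mem_Icc.1 hj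
    dsimp only
    omega
  · intro i _
    exact Fin.ext (by simp)
  · intro j hj
    have := Finset.mem_Icc.1 hj
    dsimp only
    congr 1
    omega

lemma sum_Icc_fin {M : Type*} [AddCommMonoid M] (t : ℕ) (f : ℕ → M) :
    ∑ j ∈ Icc 1 t, f j = ∑ i : Fin t, f (i.1 + 1) := by
  refine Finset.sum_bij' (fun j hj => (⟨j - 1, by have := Finset.mem_Icc.1 hj; omega⟩ : Fin t))
    (fun i _ => i.1 + 1) (fun a _ => Finset.mem_univ _) ?_ ?_ ?_ ?_
  · intro i _
    have := i.isLt
    exact Finset.mem_Icc.2 ⟨by omega, by omega⟩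
  · intro j hj
    have := Finset.mem_Icc.1 hj
    dsimp only
    omega
  · intro i _
    exact Fin.ext (by simp)
  · intro j hj
    have := Finset.mem_Icc.1 hj
    dsimp only
    congr 1
    omega

/-- Extend `m : Fin t → ℕ` to `ℕ`, shifted by one. -/
def Kfun (t : ℕ) (m : Fin t → ℕ) (j : ℕ) : ℕ :=
  if h : 1 ≤ j ∧ j ≤ t then m ⟨j - 1, by omega⟩ else 0

lemma Kfun_succ (t : ℕ) (m : Fin t → ℕ) (i : Fin t) : Kfun t m (i.1 + 1) = m i := by
  rw [Kfun, dif_pos ⟨by omega, by omega⟩]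
  exact congrArg m (Fin.ext (by simp))

lemma Kfun_zero (t : ℕ) (m : Fin t → ℕ) (j : ℕ) (hj : j ∉ Icc 1 t) : Kfun t m j = 0 := by
  rw [Finset.mem_Icc] at hj
  exact dif_neg (by omega)

lemma sum_Icc_Kfun {M : Type*} [AddCommMonoid M] (t : ℕ) (m : Fin t → ℕ) (g : ℕ → ℕ → M) :
    ∑ j ∈ Icc 1 t, g j (Kfun t m j) = ∑ i : Fin t, g (i.1 + 1) (m i) := by
  rw [sum_Icc_fin t (fun j => g j (Kfun t m j))]
  exact Finset.sum_congr rfl fun i _ => by rw [Kfun_succ]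

lemma key (s : Finset ι) (x : ι → R) (t : ℕ) (ht : 0 < t) :
    (∑ m ∈ s.sym t, ((m : Multiset ι).map x).prod) =
      (-1 : R) ^ t * ∑ m ∈ Fintype.piFinset fun _ : Fin t => Finset.range (t + 1),
        if ∑ i, (i.1 + 1) * m i = t then
          ((-1 : R) ^ (∑ i, m i) * (Nat.multinomial Finset.univ m : R)) *
            ∏ i : Fin t, (∑ S ∈ s.powersetCard (i.1 + 1), ∏ j ∈ S, x j) ^ m i
        else 0 := by
  rw [hsum_eq_coeff_prod, coeff_G_eq]
  simp only [coeff_pow_u]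
  rw [Finset.mul_sum]
  simp only [mul_ite, mul_zero]
  rw [Finset.sum_sigma', ← Finset.sum_filter, ← Finset.sum_filter]
  refine Finset.sum_nbij' (fun p => fun i : Fin t => p.2 (i.1 + 1))
    (fun m => ⟨∑ i, m i, Kfun t m⟩) ?_ ?_ ?_ ?_ ?_
  · -- forward membership
    intro p hp
    rw [Finset.mem_filter] at hp ⊢
    obtain ⟨hp1, hp2⟩ := hp
    rw [Finset.mem_sigma] at hp1
    obtain ⟨hn, hk⟩ := hp1
    rw [Finset.mem_piAntidiag] at hk
    constructor
    · rw [Fintype.mem_piFinset]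
      intro i
      rw [Finset.mem_range]
      have h1 : (i.1 + 1) * p.2 (i.1 + 1) ≤ ∑ j ∈ Icc 1 t, j * p.2 j :=
        Finset.single_le_sum (f := fun j => j * p.2 j) (fun j _ => Nat.zero_le _)
          (Finset.mem_Icc.2 ⟨by omega, by omega⟩)
      have h2 : p.2 (i.1 + 1) ≤ (i.1 + 1) * p.2 (i.1 + 1) := Nat.le_mul_of_pos_left _ (by omega)
      omega
    · show ∑ i : Fin t, (i.1 + 1) * p.2 (i.1 + 1) = t
      rw [← sum_Icc_fin t (fun j => j * p.2 j)]
      exact hp2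
  · -- backward membership
    intro m hm
    rw [Finset.mem_filter] at hm ⊢
    obtain ⟨hm1, hm2⟩ := hm
    rw [Fintype.mem_piFinset] at hm1
    constructor
    · rw [Finset.mem_sigma]
      dsimp only
      constructor
      · rw [Finset.mem_range]
        have : ∑ i, m i ≤ ∑ i, (i.1 + 1) * m i :=
          Finset.sum_le_sum fun i _ => Nat.le_mul_of_pos_left _ (by omega)
        omega
      · rw [Finset.mem_piAntidiag]
        refine ⟨?_, ?_⟩
        · exact sum_Icc_Kfun t m (fun _ v => v)
        · intro j hj
          by_contra hjmem
          exact hj (Kfun_zero t m j hjmem)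
    · show ∑ j ∈ Icc 1 t, j * Kfun t m j = t
      rw [sum_Icc_Kfun t m (fun j v => j * v)]
      exact hm2
  · -- left inverse
    intro p hp
    dsimp only
    rw [Finset.mem_filter, Finset.mem_sigma] at hp
    obtain ⟨⟨hn, hk⟩, hp2⟩ := hp
    rw [Finset.mem_piAntidiag] at hk
    have h2 : Kfun t (fun i : Fin t => p.2 (i.1 + 1)) = p.2 := by
      funext j
      by_cases h : j ∈ Icc 1 t
      · have hj := Finset.mem_Icc.1 h
        rw [Kfun, dif_pos (by omega)]
        dsimp only
        exact congrArg p.2 (by omega)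
      · rw [Kfun_zero t _ j h]
        by_contra hne
        exact h (hk.2 j (Ne.symm hne))
    have h1 : ∑ i : Fin t, p.2 (i.1 + 1) = p.1 := by
      rw [← sum_Icc_fin t (fun j => p.2 j)]
      exact hk.1
    exact Sigma.ext h1 (heq_of_eq h2)
  · -- right inverse
    intro m hm
    dsimp only
    funext i
    exact Kfun_succ t m i
  · -- terms agree
    intro p hp
    dsimp only
    rw [Finset.mem_filter, Finset.mem_sigma] at hp
    obtain ⟨⟨hn, hk⟩, hp2⟩ := hp
    rw [Finset.mem_piAntidiag] at hk
    have hsum : ∑ i : Fin t, p.2 (i.1 + 1) = p.1 := by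
      rw [← sum_Icc_fin t (fun j => p.2 j)]; exact hk.1
    have hmult : Nat.multinomial (Icc 1 t) p.2
        = Nat.multinomial Finset.univ (fun i : Fin t => p.2 (i.1 + 1)) := by
      rw [Nat.multinomial, Nat.multinomial]
      rw [sum_Icc_fin t (fun j => p.2 j), prod_Icc_fin t (fun j => Nat.factorial (p.2 j))]
    have hsplit : ∏ j ∈ Icc 1 t, ((-1 : R) ^ (j + 1) *
          ∑ S ∈ s.powersetCard j, ∏ i ∈ S, x i) ^ p.2 j
        = (-1 : R) ^ (∑ j ∈ Icc 1 t, (j + 1) * p.2 j) *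
          ∏ j ∈ Icc 1 t, (∑ S ∈ s.powersetCard j, ∏ i ∈ S, x i) ^ p.2 j := by
      rw [← Finset.prod_pow_eq_pow_sum, ← Finset.prod_mul_distrib]
      refine Finset.prod_congr rfl fun j _ => ?_
      rw [mul_pow, pow_mul]
    have hexp : ∑ j ∈ Icc 1 t, (j + 1) * p.2 j = t + p.1 := by
      have : ∑ j ∈ Icc 1 t, (j + 1) * p.2 j
          = (∑ j ∈ Icc 1 t, j * p.2 j) + ∑ j ∈ Icc 1 t, p.2 j := by
        rw [← Finset.sum_add_distrib]
        exact Finset.sum_congr rfl fun j _ => by ring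
      rw [this, hp2, hk.1]
    have hEprod : ∏ j ∈ Icc 1 t, (∑ S ∈ s.powersetCard j, ∏ i ∈ S, x i) ^ p.2 j
        = ∏ i : Fin t, (∑ S ∈ s.powersetCard (i.1 + 1), ∏ j ∈ S, x j) ^ p.2 (i.1 + 1) :=
      prod_Icc_fin t _
    rw [hsplit, hexp, hmult, hEprod, pow_add, hsum]
    ring
end MacAux

lemma umac_agree (N j : ℕ) : ∀ k ≤ N, coeff k (Umac j) =
    coeff k (∑ S ∈ (Finset.Icc 1 (N + 1)).powersetCard j,
      ∏ i ∈ S, (X ^ i * ((1 - X ^ i : ℚ⟦X⟧)⁻¹) ^ 2)) := by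
  intro k hk
  rw [Umac, coeff_mk, map_sum, map_sum]
  refine Finset.sum_subset (Finset.powersetCard_mono (Finset.Icc_subset_Icc_right (by omega))) ?_
  intro S hS hS'
  rw [Finset.mem_powersetCard] at hS hS'
  have hns : ¬ S ⊆ Finset.Icc 1 (k + 1) := fun h => hS' ⟨h, hS.2⟩
  obtain ⟨a, haS, ha⟩ := Finset.not_subset.1 hns
  have haN := hS.1 haS
  rw [Finset.mem_Icc] at ha haN
  have hprod : ∏ i ∈ S, (X ^ i * ((1 - X ^ i : ℚ⟦X⟧)⁻¹) ^ 2)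
      = X ^ (∑ i ∈ S, i) * ∏ i ∈ S, ((1 - X ^ i : ℚ⟦X⟧)⁻¹) ^ 2 := by
    rw [Finset.prod_mul_distrib, Finset.prod_pow_eq_pow_sum]
  rw [hprod]
  have hsum : k < ∑ i ∈ S, i := by
    have := Finset.single_le_sum (f := fun i : ℕ => i) (fun i _ => Nat.zero_le i) haS
    omega
  exact X_pow_dvd_iff.1 (dvd_mul_right _ _) k hsum

/-- `U*_{2t}` in terms of the `U_{2k}`, summed over partitions `(1^{m₁},…,t^{m_t}) ⊢ t`. -/
theorem UmacStar_in_terms_of_Umac (t : ℕ) (ht : 0 < t) :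
    UmacStar t = ((-1 : ℚ) ^ t) •
      ∑ m ∈ Fintype.piFinset fun _ : Fin t => Finset.range (t + 1),
        if ∑ i, (i.1 + 1) * m i = t then
          ((-1 : ℚ) ^ (∑ i, m i) * (Nat.multinomial Finset.univ m : ℚ)) •
            ∏ i : Fin t, Umac (i.1 + 1) ^ m i
        else 0 := by
  apply PowerSeries.ext
  intro N
  have hkey := MacAux.key (Finset.Icc 1 (N + 1))
    (fun k => X ^ k * ((1 - X ^ k : ℚ⟦X⟧)⁻¹) ^ 2) t ht
  rw [UmacStar, coeff_mk, hkey]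
  have hC1 : ((-1 : ℚ⟦X⟧)) ^ t = C ((-1 : ℚ) ^ t) := by rw [map_pow, map_neg, map_one]
  rw [hC1, coeff_C_mul, map_smul, smul_eq_mul]
  congr 1
  rw [map_sum, map_sum]
  refine Finset.sum_congr rfl fun m _ => ?_
  by_cases hc : ∑ i, (i.1 + 1) * m i = t
  · rw [if_pos hc, if_pos hc, map_smul, smul_eq_mul]
    have hC2 : ((-1 : ℚ⟦X⟧)) ^ (∑ i, m i) * ((Nat.multinomial Finset.univ m : ℕ) : ℚ⟦X⟧)
        = C ((-1 : ℚ) ^ (∑ i, m i) * (Nat.multinomial Finset.univ m : ℚ)) := by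
      rw [map_mul, map_pow, map_neg, map_one, map_natCast]
    rw [hC2, coeff_C_mul]
    congr 1
    refine MacAux.agree_prod Finset.univ _ _ (fun i _ => ?_) N le_rfl
    exact MacAux.agree_pow (fun k hk => (umac_agree N (i.1 + 1) k hk).symm) (m i)
  · rw [if_neg hc, if_neg hc]
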